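/- arXiv:1304.0228 — 2 statements merged into one kernel-verified Lean document; each statement's English description precedes it below -/
import Mathlib

section
/- Let 1 < k < n−1. A subset X of G is a maximal A-subset if and only if it has one of the following four forms: (1) X = {(S,U) ∈ G : U ⊆ T} for some k-dimensional subspace S and some (n−k+1)-dimensional subspace T with S + T = V; (2) X = {(S,U) ∈ G : T ⊆ U} for some k-dimensional subspace S and some (n−k−1)-dimensional subspace T with S ∩ T = 0; (3) X = {(S,U) ∈ G : S ⊆ T} for some (k+1)-dimensional subspace T and some (n−k)-dimensional subspace U with T + U = V; (4) X = {(S,U) ∈ G : T ⊆ S} for some (k−1)-dimensional subspace T and some (n−k)-dimensional subspace U with T ∩ U = 0. -/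
open Module

variable (K V : Type*) [DivisionRing K] [AddCommGroup V] [Module K V]

/-- Two subspaces `P`, `T` are adjacent: `dim P = dim T = dim (P ⊓ T) + 1`. -/
def SubAdj (P T : Submodule K V) : Prop :=
  finrank K P = finrank K T ∧ finrank K P = finrank K ↥(P ⊓ T) + 1

/-- Two subspaces are complementary. -/
def ComplSub (S U : Submodule K V) : Prop := S ⊓ U = ⊥ ∧ S ⊔ U = ⊤

/-- The set 𝒢 of pairs of complementary subspaces of dimensions `k` and `n - k`. -/
def GSet (n k : ℕ) : Set (Submodule K V × Submodule K V) :=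
  {p | finrank K p.1 = k ∧ finrank K p.2 = n - k ∧ ComplSub K V p.1 p.2}

/-- Adjacency of pairs. -/
def PairAdj (p q : Submodule K V × Submodule K V) : Prop :=
  (p.1 = q.1 ∧ SubAdj K V p.2 q.2) ∨ (SubAdj K V p.1 q.1 ∧ p.2 = q.2)

/-- Closeness of pairs. -/
def PairClose (p q : Submodule K V × Submodule K V) : Prop :=
  (p.1 = q.1 ∧ p.2 ≠ q.2) ∨ (p.1 ≠ q.1 ∧ p.2 = q.2)

/-- An A-subset: a subset of 𝒢 any two distinct elements of which are adjacent. -/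
def IsASubset (n k : ℕ) (X : Set (Submodule K V × Submodule K V)) : Prop :=
  X ⊆ GSet K V n k ∧ ∀ p ∈ X, ∀ q ∈ X, p ≠ q → PairAdj K V p q

/-- A maximal A-subset: an A-subset not properly contained in any A-subset. -/
def IsMaxASubset (n k : ℕ) (X : Set (Submodule K V × Submodule K V)) : Prop :=
  IsASubset K V n k X ∧ ¬ ∃ Y, IsASubset K V n k Y ∧ X ⊂ Y

section Aux
set_option linter.unusedSectionVars false

variable {K V : Type*} [DivisionRing K] [AddCommGroup V] [Module K V] [FiniteDimensional K V]

open Submodule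

lemma subAdj_irrefl (P : Submodule K V) : ¬ SubAdj K V P P := by
  rintro ⟨-, h⟩
  rw [inf_idem] at h
  omega

lemma SubAdj.symm' {P Q : Submodule K V} (h : SubAdj K V P Q) : SubAdj K V Q P := by
  obtain ⟨h1, h2⟩ := h
  refine ⟨h1.symm, ?_⟩
  rw [inf_comm Q P]
  omega

lemma SubAdj.ne {P Q : Submodule K V} (h : SubAdj K V P Q) : P ≠ Q := by
  rintro rfl; exact subAdj_irrefl P h

lemma finrank_sup_of_subAdj {P Q : Submodule K V} (h : SubAdj K V P Q) :
    finrank K ↥(P ⊔ Q) = finrank K P + 1 := by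
  have := Submodule.finrank_sup_add_finrank_inf_eq P Q
  obtain ⟨h1, h2⟩ := h
  omega

lemma subAdj_of_le {P Q T : Submodule K V} {m : ℕ} (hP : finrank K P = m)
    (hQ : finrank K Q = m) (hne : P ≠ Q) (hPT : P ≤ T) (hQT : Q ≤ T)
    (hT : finrank K T = m + 1) : SubAdj K V P Q := by
  have hsi := Submodule.finrank_sup_add_finrank_inf_eq P Q
  have hsup_le : finrank K ↥(P ⊔ Q) ≤ m + 1 := by
    rw [← hT]; exact Submodule.finrank_mono (sup_le hPT hQT)
  have hlt : finrank K P < finrank K ↥(P ⊔ Q) := by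
    rcases lt_or_eq_of_le (Submodule.finrank_mono (le_sup_left : P ≤ P ⊔ Q)) with h | h
    · exact h
    · exfalso
      have hPQ : P ⊔ Q = P := (Submodule.eq_of_le_of_finrank_le le_sup_left h.ge).symm
      have hQP : Q ≤ P := hPQ ▸ le_sup_right
      exact hne (Submodule.eq_of_le_of_finrank_le hQP (by omega)).symm
  constructor
  · omega
  · omega

lemma subAdj_of_ge {P Q T : Submodule K V} {m : ℕ} (hP : finrank K P = m)
    (hQ : finrank K Q = m) (hne : P ≠ Q) (hTP : T ≤ P) (hTQ : T ≤ Q)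
    (hT : finrank K T + 1 = m) : SubAdj K V P Q := by
  have hTle : T ≤ P ⊓ Q := le_inf hTP hTQ
  have h1 : finrank K T ≤ finrank K ↥(P ⊓ Q) := Submodule.finrank_mono hTle
  have h2 : finrank K ↥(P ⊓ Q) ≤ m := hP ▸ Submodule.finrank_mono inf_le_left
  refine ⟨by omega, ?_⟩
  rcases Nat.lt_or_ge (finrank K ↥(P ⊓ Q)) m with h | h
  · omega
  · exfalso
    have : P ⊓ Q = P := Submodule.eq_of_le_of_finrank_le inf_le_left (by omega)
    have hPQ : P ≤ Q := by rw [← this]; exact inf_le_right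
    exact hne (Submodule.eq_of_le_of_finrank_le hPQ (by omega))

lemma exists_notMem {A : Submodule K V} (h : A ≠ ⊤) : ∃ v, v ∉ A := by
  by_contra hc
  push_neg at hc
  exact h (Submodule.eq_top_iff'.2 hc)

lemma exists_notMem₂ {A B : Submodule K V} (hA : A ≠ ⊤) (hB : B ≠ ⊤) :
    ∃ v, v ∉ A ∧ v ∉ B := by
  obtain ⟨x, hx⟩ := exists_notMem hA
  obtain ⟨y, hy⟩ := exists_notMem hB
  by_cases hxB : x ∉ B
  · exact ⟨x, hx, hxB⟩
  by_cases hyA : y ∉ A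
  · exact ⟨y, hyA, hy⟩
  push_neg at hxB hyA
  refine ⟨x + y, fun h => hx ?_, fun h => hy ?_⟩
  · simpa using A.sub_mem h hyA
  · simpa using B.sub_mem h hxB

lemma inf_span_eq_bot {W : Submodule K V} {v : V} (hv : v ∉ W) :
    W ⊓ Submodule.span K {v} = ⊥ := by
  rw [eq_bot_iff]
  rintro x ⟨hxW, hxv⟩
  obtain ⟨a, rfl⟩ := Submodule.mem_span_singleton.1 hxv
  rcases eq_or_ne a 0 with rfl | ha
  · simp
  · exact absurd (by simpa [ha] using W.smul_mem a⁻¹ hxW) hv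

lemma finrank_sup_span {W : Submodule K V} {v : V} (hv : v ∉ W) :
    finrank K ↥(W ⊔ Submodule.span K {v}) = finrank K W + 1 := by
  have hv0 : v ≠ 0 := fun h => hv (h ▸ W.zero_mem)
  have h1 : finrank K ↥(Submodule.span K {v}) = 1 := finrank_span_singleton hv0
  have := Submodule.finrank_sup_add_finrank_inf_eq W (Submodule.span K {v})
  rw [inf_span_eq_bot hv] at this
  simp only [finrank_bot] at this
  omega

lemma exists_relcompl {L T : Submodule K V} (h : L ≤ T) :
    ∃ U, U ≤ T ∧ U ⊓ L = ⊥ ∧ U ⊔ L = T ∧ finrank K U + finrank K L = finrank K T := by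
  obtain ⟨M, hM⟩ := Submodule.exists_isCompl (L.comap T.subtype)
  have hL : (L.comap T.subtype).map T.subtype = L := by
    rw [Submodule.map_comap_subtype]
    exact inf_eq_right.2 h
  refine ⟨M.map T.subtype, ?_, ?_, ?_, ?_⟩
  · exact Submodule.map_subtype_le T M
  · rw [← hL, ← Submodule.map_inf _ T.injective_subtype, hM.symm.inf_eq_bot, Submodule.map_bot]
  · rw [← hL, ← Submodule.map_sup, hM.symm.sup_eq_top, Submodule.map_subtype_top]
  · have h1 : finrank K ↥(M.map T.subtype) = finrank K M :=
      Submodule.finrank_map_subtype_eq T M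
    have h2 : finrank K ↥((L.comap T.subtype).map T.subtype) = finrank K (L.comap T.subtype) :=
      Submodule.finrank_map_subtype_eq T _
    rw [hL] at h2
    have h3 := Submodule.finrank_add_eq_of_isCompl hM
    omega

lemma exists_finrank_eq' (d : ℕ) (hd : d ≤ finrank K V) :
    ∃ W : Submodule K V, finrank K W = d := by
  induction d with
  | zero => exact ⟨⊥, finrank_bot K V⟩
  | succ d ih =>
    obtain ⟨W, hW⟩ := ih (by omega)
    have hWne : W ≠ ⊤ := by
      intro h
      rw [h, finrank_top] at hW
      omega
    obtain ⟨v, hv⟩ := exists_notMem hWne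
    exact ⟨W ⊔ Submodule.span K {v}, by rw [finrank_sup_span hv, hW]⟩

/-- The set of complements of `F` having dimension `m`. -/
def CSet' {K V : Type*} [DivisionRing K] [AddCommGroup V] [Module K V]
    (F : Submodule K V) (m : ℕ) : Set (Submodule K V) :=
  {U | finrank K U = m ∧ F ⊓ U = ⊥ ∧ F ⊔ U = ⊤}

lemma mem_sup_span {W : Submodule K V} {v x : V} :
    x ∈ W ⊔ Submodule.span K {v} ↔ ∃ w ∈ W, ∃ a : K, x = w + a • v := by
  rw [Submodule.mem_sup]
  constructor
  · rintro ⟨w, hw, z, hz, rfl⟩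
    obtain ⟨a, rfl⟩ := Submodule.mem_span_singleton.1 hz
    exact ⟨w, hw, a, rfl⟩
  · rintro ⟨w, hw, a, rfl⟩
    exact ⟨w, hw, a • v, Submodule.smul_mem _ _ (Submodule.mem_span_singleton_self v), rfl⟩

lemma exists_ne_zero_of_finrank_pos {U : Submodule K V} (h : 0 < finrank K U) :
    ∃ u ∈ U, u ≠ 0 := by
  have : U ≠ ⊥ := by
    intro hb
    rw [hb, finrank_bot] at h
    omega
  obtain ⟨x, hx, hx0⟩ := Submodule.exists_mem_ne_zero_of_ne_bot this
  exact ⟨x, hx, hx0⟩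

section Core
set_option maxHeartbeats 1000000

variable {F T : Submodule K V} {m : ℕ}

lemma compl_finrank_add {F U : Submodule K V} (h1 : F ⊓ U = ⊥) (h2 : F ⊔ U = ⊤) :
    finrank K F + finrank K U = finrank K V := by
  have := Submodule.finrank_sup_add_finrank_inf_eq F U
  rw [h1, h2, finrank_bot, finrank_top] at this
  omega

lemma top_L (hsum : finrank K F + m = finrank K V) (hT : finrank K T = m + 1)
    (hFT : F ⊔ T = ⊤) : finrank K ↥(F ⊓ T) = 1 := by
  have := Submodule.finrank_sup_add_finrank_inf_eq F T
  rw [hFT, finrank_top] at this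
  omega

lemma mem_top_of_relcompl (hsum : finrank K F + m = finrank K V)
    (hT : finrank K T = m + 1) (hFT : F ⊔ T = ⊤) {U : Submodule K V} (hUT : U ≤ T)
    (h1 : U ⊓ (F ⊓ T) = ⊥) (h2 : U ⊔ (F ⊓ T) = T) : U ∈ CSet' F m := by
  have hL : finrank K ↥(F ⊓ T) = 1 := top_L hsum hT hFT
  have hdim : finrank K U = m := by
    have := Submodule.finrank_sup_add_finrank_inf_eq U (F ⊓ T)
    rw [h1, h2, finrank_bot] at this
    omega
  refine ⟨hdim, ?_, ?_⟩
  · rw [eq_bot_iff]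
    rintro x ⟨hxF, hxU⟩
    have : x ∈ U ⊓ (F ⊓ T) := ⟨hxU, hxF, hUT hxU⟩
    rwa [h1] at this
  · rw [eq_top_iff, ← hFT]
    refine sup_le le_sup_left ?_
    rw [← h2]
    exact sup_le (le_sup_right.trans (le_refl _)) (inf_le_left.trans le_sup_left)

lemma relcompl_of_mem_top (hsum : finrank K F + m = finrank K V)
    (hT : finrank K T = m + 1) (hFT : F ⊔ T = ⊤) {U : Submodule K V}
    (hU : U ∈ CSet' F m) (hUT : U ≤ T) : U ⊓ (F ⊓ T) = ⊥ ∧ U ⊔ (F ⊓ T) = T := by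
  obtain ⟨hdim, hi, hs⟩ := hU
  have hL : finrank K ↥(F ⊓ T) = 1 := top_L hsum hT hFT
  have h1 : U ⊓ (F ⊓ T) = ⊥ := by
    rw [eq_bot_iff]
    rintro x ⟨hxU, hxF, hxT⟩
    have : x ∈ F ⊓ U := ⟨hxF, hxU⟩
    rwa [hi] at this
  refine ⟨h1, ?_⟩
  have hle : U ⊔ (F ⊓ T) ≤ T := sup_le hUT inf_le_right
  refine Submodule.eq_of_le_of_finrank_le hle ?_
  have := Submodule.finrank_sup_add_finrank_inf_eq U (F ⊓ T)
  rw [h1, finrank_bot] at this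
  omega

lemma topTwo (hsum : finrank K F + m = finrank K V) (hT : finrank K T = m + 1)
    (hFT : F ⊔ T = ⊤) (hm : 1 ≤ m) :
    ∃ U1 U2 : Submodule K V, U1 ∈ CSet' F m ∧ U1 ≤ T ∧ U2 ∈ CSet' F m ∧ U2 ≤ T ∧ U1 ≠ U2 := by
  have hL : finrank K ↥(F ⊓ T) = 1 := top_L hsum hT hFT
  obtain ⟨U1, hU1T, hU1i, hU1s, hU1d⟩ := exists_relcompl (inf_le_right : F ⊓ T ≤ T)
  have hU1m : finrank K U1 = m := by omega
  obtain ⟨u, huU1, hu0⟩ := exists_ne_zero_of_finrank_pos (by omega : 0 < finrank K U1)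
  obtain ⟨l, hlL, hl0⟩ := exists_ne_zero_of_finrank_pos (by omega : 0 < finrank K ↥(F ⊓ T))
  have hspanu : Submodule.span K {u} ≤ U1 := Submodule.span_le.2 (by simpa using huU1)
  obtain ⟨W, hWU1, hWi, hWs, hWd⟩ := exists_relcompl hspanu
  have hu1 : finrank K ↥(Submodule.span K {u}) = 1 := finrank_span_singleton hu0
  have hWm : finrank K W + 1 = m := by omega
  -- U2 := W ⊔ span (u + l)
  set U2 := W ⊔ Submodule.span K {u + l} with hU2def
  have hulT : u + l ∈ T := T.add_mem (hU1T huU1) hlL.2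
  have hulnW : u + l ∉ U1 := by
    intro hmem
    have : l ∈ U1 := by simpa using U1.sub_mem hmem huU1
    have : l ∈ U1 ⊓ (F ⊓ T) := ⟨this, hlL⟩
    rw [hU1i] at this
    simp at this
    exact hl0 this
  have hU2T : U2 ≤ T := sup_le (hWU1.trans hU1T) (Submodule.span_le.2 (by simpa using hulT))
  have hU2i : U2 ⊓ (F ⊓ T) = ⊥ := by
    rw [eq_bot_iff]
    rintro x ⟨hxU2, hxL⟩
    obtain ⟨w, hw, a, rfl⟩ := mem_sup_span.1 hxU2
    have hwu : w + a • u ∈ U1 := U1.add_mem (hWU1 hw) (U1.smul_mem a huU1)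
    have hwl : w + a • u ∈ U1 ⊓ (F ⊓ T) := by
      refine ⟨hwu, ?_⟩
      have : w + a • u = (w + a • (u + l)) - a • l := by rw [smul_add]; abel
      rw [this]
      exact Submodule.sub_mem _ hxL (Submodule.smul_mem _ a hlL)
    rw [hU1i] at hwl
    have hwau : w + a • u = 0 := by simpa using hwl
    have hwspan : w ∈ W ⊓ Submodule.span K {u} := by
      refine Submodule.mem_inf.2 ⟨hw, ?_⟩
      rw [Submodule.mem_span_singleton]
      exact ⟨-a, by rw [neg_smul]; exact neg_eq_of_add_eq_zero_left hwau⟩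
    rw [hWi] at hwspan
    have hw0 : w = (0 : V) := by simpa using hwspan
    have ha : a = 0 := by
      rw [hw0, zero_add, smul_eq_zero] at hwau
      exact hwau.resolve_right hu0
    simp [hw0, ha]
  have hU2s : U2 ⊔ (F ⊓ T) = T := by
    refine le_antisymm (sup_le hU2T inf_le_right) ?_
    have hu_mem : u ∈ U2 ⊔ (F ⊓ T) := by
      have h1 : u + l ∈ U2 ⊔ (F ⊓ T) :=
        Submodule.mem_sup_left (Submodule.mem_sup_right (Submodule.mem_span_singleton_self (u + l)))
      have h2 : l ∈ U2 ⊔ (F ⊓ T) := Submodule.mem_sup_right hlL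
      simpa using Submodule.sub_mem _ h1 h2
    have hU1le : U1 ≤ U2 ⊔ (F ⊓ T) := by
      rw [← hWs]
      have hWU2 : W ≤ U2 := le_sup_left
      have hU2le : U2 ≤ U2 ⊔ (F ⊓ T) := le_sup_left
      refine sup_le (hWU2.trans hU2le) ?_
      rw [Submodule.span_le]
      simpa using hu_mem
    have hfin : U1 ⊔ (F ⊓ T) ≤ U2 ⊔ (F ⊓ T) := sup_le hU1le le_sup_right
    rw [hU1s] at hfin
    exact hfin
  have hne : U1 ≠ U2 := by
    intro he
    have : u + l ∈ U1 := by
      rw [he]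
      exact Submodule.mem_sup_right (Submodule.mem_span_singleton_self (u + l))
    exact hulnW this
  exact ⟨U1, U2, mem_top_of_relcompl hsum hT hFT hU1T hU1i hU1s, hU1T,
    mem_top_of_relcompl hsum hT hFT hU2T hU2i hU2s, hU2T, hne⟩

lemma sup_hyperplanes {A B C : Submodule K V} (hA : A ≤ C) (hB : B ≤ C)
    (hdA : finrank K A + 1 = finrank K C) (hdB : finrank K B + 1 = finrank K C)
    (hne : A ≠ B) : A ⊔ B = C := by
  have hle : A ⊔ B ≤ C := sup_le hA hB
  rcases Nat.lt_or_ge (finrank K ↥(A ⊔ B)) (finrank K C) with h | h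
  · exfalso
    have h1 : finrank K ↥(A ⊔ B) ≤ finrank K A := by
      have := Submodule.finrank_mono (le_sup_left : A ≤ A ⊔ B)
      omega
    have h2 : A ⊔ B = A := (Submodule.eq_of_le_of_finrank_le le_sup_left h1).symm
    have h3 : B ≤ A := h2 ▸ le_sup_right
    exact hne (Submodule.eq_of_le_of_finrank_le h3 (by omega)).symm
  · exact Submodule.eq_of_le_of_finrank_le hle h

lemma FsupT_finrank (hsum : finrank K F + m = finrank K V)
    (hT : finrank K T + 1 = m) (hFT : F ⊓ T = ⊥) :
    finrank K ↥(F ⊔ T) + 1 = finrank K V := by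
  have := Submodule.finrank_sup_add_finrank_inf_eq F T
  rw [hFT, finrank_bot] at this
  omega

lemma FsupT_ne_top (hsum : finrank K F + m = finrank K V)
    (hT : finrank K T + 1 = m) (hFT : F ⊓ T = ⊥) (hm : 1 ≤ m) : F ⊔ T ≠ ⊤ := by
  have h := FsupT_finrank hsum hT hFT
  intro he
  rw [he, finrank_top] at h
  omega

lemma star_mem (hsum : finrank K F + m = finrank K V)
    (hT : finrank K T + 1 = m) (hFT : F ⊓ T = ⊥) {v : V} (hv : v ∉ F ⊔ T) :
    T ⊔ Submodule.span K {v} ∈ CSet' F m ∧ T ≤ T ⊔ Submodule.span K {v} := by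
  have hvT : v ∉ T := fun h => hv (Submodule.mem_sup_right h)
  have hdim : finrank K ↥(T ⊔ Submodule.span K {v}) = m := by
    rw [finrank_sup_span hvT]; omega
  refine ⟨⟨hdim, ?_, ?_⟩, le_sup_left⟩
  · rw [eq_bot_iff]
    rintro x hx
    have hxF : x ∈ F := hx.1
    obtain ⟨t, ht, a, rfl⟩ := mem_sup_span.1 hx.2
    rcases eq_or_ne a 0 with rfl | ha
    · simp only [zero_smul, add_zero] at hxF ⊢
      have : t ∈ F ⊓ T := ⟨hxF, ht⟩
      rwa [hFT] at this
    · exfalso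
      apply hv
      have h1 : a • v = (t + a • v) - t := by abel
      have h2 : a • v ∈ F ⊔ T :=
        h1 ▸ Submodule.sub_mem _ (Submodule.mem_sup_left hxF) (Submodule.mem_sup_right ht)
      simpa [ha] using (F ⊔ T).smul_mem a⁻¹ h2
  · have hassoc : F ⊔ (T ⊔ Submodule.span K {v}) = (F ⊔ T) ⊔ Submodule.span K {v} :=
      (sup_assoc F T _).symm
    rw [hassoc]
    apply Submodule.eq_top_of_finrank_eq
    rw [finrank_sup_span hv]
    have := FsupT_finrank hsum hT hFT
    omega

lemma starTwo (hsum : finrank K F + m = finrank K V)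
    (hT : finrank K T + 1 = m) (hFT : F ⊓ T = ⊥) (hm : 1 ≤ m) (hF : 1 ≤ finrank K F) :
    ∃ U1 U2 : Submodule K V, U1 ∈ CSet' F m ∧ T ≤ U1 ∧ U2 ∈ CSet' F m ∧ T ≤ U2 ∧ U1 ≠ U2 := by
  obtain ⟨v, hv⟩ := exists_notMem (FsupT_ne_top hsum hT hFT hm)
  obtain ⟨f, hfF, hf0⟩ := exists_ne_zero_of_finrank_pos (by omega : 0 < finrank K F)
  have hvf : v + f ∉ F ⊔ T := by
    intro h
    exact hv (by simpa using Submodule.sub_mem _ h (Submodule.mem_sup_left hfF))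
  obtain ⟨hm1, hle1⟩ := star_mem hsum hT hFT hv
  obtain ⟨hm2, hle2⟩ := star_mem hsum hT hFT hvf
  refine ⟨_, _, hm1, hle1, hm2, hle2, ?_⟩
  intro he
  have hv1 : v ∈ T ⊔ Submodule.span K {v} :=
    Submodule.mem_sup_right (Submodule.mem_span_singleton_self v)
  have hv2 : v + f ∈ T ⊔ Submodule.span K {v} := by
    rw [he]
    exact Submodule.mem_sup_right (Submodule.mem_span_singleton_self (v + f))
  have hfme : f ∈ F ⊓ (T ⊔ Submodule.span K {v}) :=
    ⟨hfF, by simpa using Submodule.sub_mem _ hv2 hv1⟩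
  rw [hm1.2.1] at hfme
  exact hf0 (by simpa using hfme)

lemma starSat (hsum : finrank K F + m = finrank K V)
    (hT : finrank K T + 1 = m) (hFT : F ⊓ T = ⊥) (hm : 1 ≤ m) (hF : 2 ≤ finrank K F)
    {U' : Submodule K V} (hU' : U' ∈ CSet' F m)
    (hadj : ∀ U ∈ CSet' F m, T ≤ U → U ≠ U' → SubAdj K V U' U) : T ≤ U' := by
  by_contra hTU'
  obtain ⟨hU'm, hU'i, hU's⟩ := hU'
  -- every member of the star is contained in Z := U' ⊔ T
  have key : ∀ U ∈ CSet' F m, T ≤ U → U ≤ U' ⊔ T ∧ finrank K ↥(U' ⊔ T) = m + 1 := by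
    intro U hU hTU
    have hUne : U ≠ U' := fun he => hTU' (he ▸ hTU)
    have hadjU := hadj U hU hTU hUne
    have hsupd : finrank K ↥(U' ⊔ U) = m + 1 := by
      rw [finrank_sup_of_subAdj hadjU, hU'm]
    have hZle : U' ⊔ T ≤ U' ⊔ U := sup_le le_sup_left (hTU.trans le_sup_right)
    have hZlt : finrank K ↥U' < finrank K ↥(U' ⊔ T) := by
      apply Submodule.finrank_lt_finrank_of_lt
      rcases lt_or_eq_of_le (le_sup_left : U' ≤ U' ⊔ T) with h | h
      · exact h
      · exact absurd (h ▸ le_sup_right : T ≤ U') hTU'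
    have hZd : finrank K ↥(U' ⊔ U) ≤ finrank K ↥(U' ⊔ T) := by
      have := Submodule.finrank_mono hZle
      omega
    have hZeq : U' ⊔ T = U' ⊔ U := Submodule.eq_of_le_of_finrank_le hZle hZd
    exact ⟨hZeq ▸ le_sup_right, by rw [hZeq, hsupd]⟩
  -- Z is a proper subspace
  obtain ⟨v0, hv0⟩ := exists_notMem (FsupT_ne_top hsum hT hFT hm)
  obtain ⟨hmem0, hle0⟩ := star_mem hsum hT hFT hv0
  obtain ⟨-, hZdim⟩ := key _ hmem0 hle0
  have hZne : U' ⊔ T ≠ ⊤ := by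
    intro he
    rw [he, finrank_top] at hZdim
    omega
  obtain ⟨v, hvZ, hvFT⟩ := exists_notMem₂ hZne (FsupT_ne_top hsum hT hFT hm)
  obtain ⟨hmemv, hlev⟩ := star_mem hsum hT hFT hvFT
  obtain ⟨hUle, -⟩ := key _ hmemv hlev
  exact hvZ (hUle (Submodule.mem_sup_right (Submodule.mem_span_singleton_self v)))

lemma topSat (hsum : finrank K F + m = finrank K V) (hT : finrank K T = m + 1)
    (hFT : F ⊔ T = ⊤) (hm : 2 ≤ m) {U' : Submodule K V} (hU' : U' ∈ CSet' F m)
    (hadj : ∀ U ∈ CSet' F m, U ≤ T → U ≠ U' → SubAdj K V U' U) : U' ≤ T := by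
  by_contra hU'T
  obtain ⟨hU'm, hU'i, hU's⟩ := hU'
  have hL : finrank K ↥(F ⊓ T) = 1 := top_L hsum hT hFT
  set W := U' ⊓ T with hWdef
  have hWU' : W ≤ U' := inf_le_left
  have hWT : W ≤ T := inf_le_right
  have hWlt : finrank K ↥W + 1 ≤ m := by
    rcases Nat.lt_or_ge (finrank K ↥W) m with h | h
    · omega
    · exfalso
      have : W = U' := Submodule.eq_of_le_of_finrank_le hWU' (by omega)
      exact hU'T (this ▸ hWT)
  -- every member of the top has intersection with U' equal to W
  have key : ∀ U ∈ CSet' F m, U ≤ T → U' ⊓ U = W ∧ finrank K ↥W + 1 = m := by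
    intro U hU hUT
    have hUne : U ≠ U' := fun he => hU'T (he ▸ hUT)
    have hadjU := hadj U hU hUT hUne
    have hint : finrank K ↥(U' ⊓ U) + 1 = m := by
      have := hadjU.2
      omega
    have hsub : U' ⊓ U ≤ W := le_inf inf_le_left (inf_le_right.trans hUT)
    have hWd : finrank K ↥W ≤ finrank K ↥(U' ⊓ U) := by
      have := Submodule.finrank_mono hsub
      omega
    have heq : U' ⊓ U = W := Submodule.eq_of_le_of_finrank_le hsub hWd
    refine ⟨heq, ?_⟩
    rw [← heq]
    exact hint
  -- the top is nonempty
  obtain ⟨U1, hU1T, hU1i, hU1s, hU1d⟩ := exists_relcompl (inf_le_right : F ⊓ T ≤ T)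
  have hU1mem : U1 ∈ CSet' F m := mem_top_of_relcompl hsum hT hFT hU1T hU1i hU1s
  obtain ⟨-, hWm⟩ := key U1 hU1mem hU1T
  -- pick a nonzero w ∈ W, ℓ ∈ L
  obtain ⟨w, hwW, hw0⟩ := exists_ne_zero_of_finrank_pos (by omega : 0 < finrank K ↥W)
  obtain ⟨l, hlL, hl0⟩ := exists_ne_zero_of_finrank_pos (by omega : 0 < finrank K ↥(F ⊓ T))
  have hwT : w ∈ T := hWT hwW
  have hwL : w ∉ F ⊓ T := by
    intro h
    have : w ∈ F ⊓ U' := ⟨h.1, hWU' hwW⟩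
    rw [hU'i] at this
    exact hw0 (by simpa using this)
  -- construct a member of the top avoiding w
  have hLwT : (F ⊓ T) ⊔ Submodule.span K {w} ≤ T :=
    sup_le inf_le_right (Submodule.span_le.2 (by simpa using hwT))
  obtain ⟨U0, hU0T, hU0i, hU0s, hU0d⟩ := exists_relcompl hLwT
  have hLw2 : finrank K ↥((F ⊓ T) ⊔ Submodule.span K {w}) = 2 := by
    rw [finrank_sup_span hwL, hL]
  set U := U0 ⊔ Submodule.span K {w + l} with hUdef
  have hwlT : w + l ∈ T := T.add_mem hwT hlL.2
  have hUT : U ≤ T := sup_le hU0T (Submodule.span_le.2 (by simpa using hwlT))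
  have hLle : F ⊓ T ≤ (F ⊓ T) ⊔ Submodule.span K {w} := le_sup_left
  have hwle : w ∈ (F ⊓ T) ⊔ Submodule.span K {w} :=
    Submodule.mem_sup_right (Submodule.mem_span_singleton_self w)
  have hUi : U ⊓ (F ⊓ T) = ⊥ := by
    rw [eq_bot_iff]
    rintro x ⟨hxU, hxL⟩
    obtain ⟨u0, hu0, a, rfl⟩ := mem_sup_span.1 hxU
    have hu0L : u0 ∈ U0 ⊓ ((F ⊓ T) ⊔ Submodule.span K {w}) := by
      refine ⟨hu0, ?_⟩
      have : u0 = (u0 + a • (w + l)) - a • w - a • l := by rw [smul_add]; abel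
      rw [this]
      refine Submodule.sub_mem _ (Submodule.sub_mem _ (hLle hxL) ?_) ?_
      · exact Submodule.smul_mem _ a hwle
      · exact hLle ((F ⊓ T).smul_mem a hlL)
    rw [hU0i] at hu0L
    have hu00 : u0 = (0 : V) := by simpa using hu0L
    rw [hu00, zero_add] at hxL ⊢
    have haw : a • w ∈ F ⊓ T := by
      have : a • w = a • (w + l) - a • l := by rw [smul_add]; abel
      rw [this]
      exact Submodule.sub_mem _ hxL ((F ⊓ T).smul_mem a hlL)
    rcases eq_or_ne a 0 with rfl | ha
    · simp
    · exact absurd (by simpa [ha] using (F ⊓ T).smul_mem a⁻¹ haw) hwL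
  have hUs : U ⊔ (F ⊓ T) = T := by
    refine le_antisymm (sup_le hUT inf_le_right) ?_
    have hw_mem : w ∈ U ⊔ (F ⊓ T) := by
      have h1 : w + l ∈ U ⊔ (F ⊓ T) :=
        Submodule.mem_sup_left (Submodule.mem_sup_right (Submodule.mem_span_singleton_self (w + l)))
      have h2 : l ∈ U ⊔ (F ⊓ T) := Submodule.mem_sup_right hlL
      simpa using Submodule.sub_mem _ h1 h2
    have hLw_le : (F ⊓ T) ⊔ Submodule.span K {w} ≤ U ⊔ (F ⊓ T) :=
      sup_le le_sup_right (Submodule.span_le.2 (by simpa using hw_mem))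
    have hU0le : U0 ≤ U ⊔ (F ⊓ T) := le_sup_left.trans le_sup_left
    have := sup_le hU0le hLw_le
    rwa [hU0s] at this
  have hUmem : U ∈ CSet' F m := mem_top_of_relcompl hsum hT hFT hUT hUi hUs
  obtain ⟨hWeq, -⟩ := key U hUmem hUT
  -- but w ∈ W ≤ U' ⊓ U = W means w ∈ U, contradiction
  have hwU : w ∈ U := by
    have : w ∈ U' ⊓ U := hWeq.symm ▸ hwW
    exact this.2
  obtain ⟨u0, hu0, a, hdecomp⟩ := mem_sup_span.1 hwU
  have hu0eq : u0 = (1 - a) • w - a • l := by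
    have h1 : u0 = w - a • (w + l) := by rw [eq_sub_iff_add_eq]; exact hdecomp.symm
    rw [h1, smul_add, sub_smul, one_smul]
    abel
  have hu0L : u0 ∈ U0 ⊓ ((F ⊓ T) ⊔ Submodule.span K {w}) := by
    refine ⟨hu0, ?_⟩
    rw [hu0eq]
    refine Submodule.sub_mem _ ?_ (hLle ((F ⊓ T).smul_mem a hlL))
    exact Submodule.smul_mem _ _ hwle
  rw [hU0i] at hu0L
  have hu00 : u0 = (0 : V) := by simpa using hu0L
  rw [hu00] at hu0eq
  have hwl_eq : (1 - a) • w = a • l := by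
    have := hu0eq.symm
    rwa [sub_eq_zero] at this
  rcases eq_or_ne a 0 with rfl | ha
  · rw [zero_smul, sub_zero, one_smul] at hwl_eq
    exact hw0 hwl_eq
  · have hlw : l = (a⁻¹ * (1 - a)) • w := by
      rw [mul_smul, hwl_eq, ← mul_smul, inv_mul_cancel₀ ha, one_smul]
    rcases eq_or_ne (a⁻¹ * (1 - a)) 0 with hc | hc
    · rw [hc, zero_smul] at hlw
      exact hl0 hlw
    · apply hwL
      have hwrep : w = (a⁻¹ * (1 - a))⁻¹ • l := by
        rw [hlw, ← mul_smul, inv_mul_cancel₀ hc, one_smul]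
      rw [hwrep]
      exact (F ⊓ T).smul_mem _ hlL

lemma cliqueClass {Y : Set (Submodule K V)} (hsub : Y ⊆ CSet' F m)
    (hadj : ∀ U ∈ Y, ∀ U' ∈ Y, U ≠ U' → SubAdj K V U U')
    {U1 U2 : Submodule K V} (h1 : U1 ∈ Y) (h2 : U2 ∈ Y) (h12 : U1 ≠ U2) :
    (∃ T' : Submodule K V, finrank K T' = m + 1 ∧ F ⊔ T' = ⊤ ∧ ∀ U ∈ Y, U ≤ T') ∨
    (∃ T' : Submodule K V, finrank K T' + 1 = m ∧ F ⊓ T' = ⊥ ∧ ∀ U ∈ Y, T' ≤ U) := by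
  have hdim : ∀ U ∈ Y, finrank K U = m := fun U hU => (hsub hU).1
  have hint : ∀ U ∈ Y, ∀ U' ∈ Y, U ≠ U' → finrank K ↥(U ⊓ U') + 1 = m := by
    intro U hU U' hU' hne
    have h := (hadj U hU U' hU' hne).2
    have := hdim U hU
    omega
  set W12 := U1 ⊓ U2 with hW12
  set T12 := U1 ⊔ U2 with hT12
  have hW12d : finrank K ↥W12 + 1 = m := hint U1 h1 U2 h2 h12
  have hT12d : finrank K ↥T12 = m + 1 := by
    rw [hT12, finrank_sup_of_subAdj (hadj U1 h1 U2 h2 h12), hdim U1 h1]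
  by_cases hstar : ∀ U ∈ Y, W12 ≤ U
  · right
    refine ⟨W12, hW12d, ?_, hstar⟩
    rw [eq_bot_iff, ← (hsub h1).2.1]
    exact inf_le_inf_left F (inf_le_left : W12 ≤ U1)
  · left
    push_neg at hstar
    obtain ⟨U3, hU3Y, hWU3⟩ := hstar
    have hFT12 : F ⊔ T12 = ⊤ := by
      rw [eq_top_iff, ← (hsub h1).2.2]
      exact sup_le le_sup_left ((le_sup_left : U1 ≤ T12).trans le_sup_right)
    refine ⟨T12, hT12d, hFT12, ?_⟩
    have hU31 : U3 ≠ U1 := fun he => hWU3 (he ▸ (inf_le_left : W12 ≤ U1))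
    have hU32 : U3 ≠ U2 := fun he => hWU3 (he ▸ (inf_le_right : W12 ≤ U2))
    -- step 1 : U3 ≤ T12
    have hU3T : U3 ≤ T12 := by
      set A1 := U1 ⊓ U3 with hA1
      set A2 := U2 ⊓ U3 with hA2
      have hA1d : finrank K ↥A1 + 1 = m := hint U1 h1 U3 hU3Y hU31.symm
      have hA2d : finrank K ↥A2 + 1 = m := hint U2 h2 U3 hU3Y hU32.symm
      have hA12 : A1 ≠ A2 := by
        intro he
        apply hWU3
        have hle : A1 ≤ W12 := le_inf inf_le_left (he ▸ (inf_le_left : A2 ≤ U2))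
        have : A1 = W12 := Submodule.eq_of_le_of_finrank_le hle (by omega)
        exact this ▸ (inf_le_right : A1 ≤ U3)
      have hsup : A1 ⊔ A2 = U3 :=
        sup_hyperplanes (inf_le_right) (inf_le_right)
          (by rw [hdim U3 hU3Y]; omega) (by rw [hdim U3 hU3Y]; omega) hA12
      have hfin : A1 ⊔ A2 ≤ T12 := sup_le ((inf_le_left : A1 ≤ U1).trans le_sup_left)
        ((inf_le_left : A2 ≤ U2).trans le_sup_right)
      rwa [hsup] at hfin
    -- step 2 : every member of Y is contained in T12
    intro U hUY
    rcases eq_or_ne U U1 with rfl | hne1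
    · exact le_sup_left
    rcases eq_or_ne U U2 with rfl | hne2
    · exact le_sup_right
    by_contra hUT
    have hne3 : U ≠ U3 := fun he => hUT (he ▸ hU3T)
    have hB1d : finrank K ↥(U ⊓ U1) + 1 = m := hint U hUY U1 h1 hne1
    have hB2d : finrank K ↥(U ⊓ U2) + 1 = m := hint U hUY U2 h2 hne2
    have hB12 : U ⊓ U1 = U ⊓ U2 := by
      by_contra hne
      apply hUT
      have hsup : (U ⊓ U1) ⊔ (U ⊓ U2) = U :=
        sup_hyperplanes inf_le_left inf_le_left
          (by rw [hdim U hUY]; omega) (by rw [hdim U hUY]; omega) hne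
      have hfin : (U ⊓ U1) ⊔ (U ⊓ U2) ≤ T12 :=
        sup_le ((inf_le_right : U ⊓ U1 ≤ U1).trans le_sup_left)
          ((inf_le_right : U ⊓ U2 ≤ U2).trans le_sup_right)
      rwa [hsup] at hfin
    have hWU : W12 ≤ U := by
      have hle : U ⊓ U1 ≤ W12 := le_inf inf_le_right (hB12 ▸ (inf_le_right : U ⊓ U2 ≤ U2))
      have heq : U ⊓ U1 = W12 := Submodule.eq_of_le_of_finrank_le hle (by omega)
      exact heq ▸ (inf_le_left : U ⊓ U1 ≤ U)
    -- U ⊓ T12 = W12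
    have hUT12W : U ⊓ T12 = W12 := by
      have hge : W12 ≤ U ⊓ T12 := le_inf hWU ((inf_le_left : W12 ≤ U1).trans le_sup_left)
      have hlt : finrank K ↥(U ⊓ T12) + 1 ≤ m := by
        rcases Nat.lt_or_ge (finrank K ↥(U ⊓ T12)) (finrank K ↥U) with h | h
        · rw [hdim U hUY] at h; omega
        · exfalso
          have : U ⊓ T12 = U := Submodule.eq_of_le_of_finrank_le inf_le_left h
          exact hUT (this ▸ (inf_le_right : U ⊓ T12 ≤ T12))
      exact (Submodule.eq_of_le_of_finrank_le hge (by omega)).symm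
    have hB3d : finrank K ↥(U ⊓ U3) + 1 = m := hint U hUY U3 hU3Y hne3
    have hB3le : U ⊓ U3 ≤ W12 := hUT12W ▸ le_inf inf_le_left (inf_le_right.trans hU3T)
    have hB3eq : U ⊓ U3 = W12 := Submodule.eq_of_le_of_finrank_le hB3le (by omega)
    exact hWU3 (hB3eq ▸ (inf_le_right : U ⊓ U3 ≤ U3))

lemma adjPartner (hm : 1 ≤ m) (hF : 1 ≤ finrank K F)
    (hsum : finrank K F + m = finrank K V) {U : Submodule K V} (hU : U ∈ CSet' F m) :
    ∃ U' ∈ CSet' F m, U' ≠ U ∧ SubAdj K V U U' := by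
  obtain ⟨hUm, hUi, hUs⟩ := hU
  obtain ⟨s, hsF, hs0⟩ := exists_ne_zero_of_finrank_pos (by omega : 0 < finrank K F)
  have hsU : s ∉ U := by
    intro h
    have : s ∈ F ⊓ U := ⟨hsF, h⟩
    rw [hUi] at this
    exact hs0 (by simpa using this)
  set T := U ⊔ Submodule.span K {s} with hTdef
  have hTd : finrank K ↥T = m + 1 := by rw [hTdef, finrank_sup_span hsU, hUm]
  have hFT : F ⊔ T = ⊤ := by
    rw [eq_top_iff, ← hUs]
    exact sup_le le_sup_left ((le_sup_left : U ≤ T).trans le_sup_right)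
  have hUT : U ≤ T := le_sup_left
  obtain ⟨U1, U2, hU1, hU1T, hU2, hU2T, h12⟩ := topTwo hsum hTd hFT hm
  rcases eq_or_ne U1 U with rfl | hne1
  · exact ⟨U2, hU2, h12.symm, subAdj_of_le hUm hU2.1 (Ne.symm h12.symm) hUT hU2T hTd⟩
  · exact ⟨U1, hU1, hne1, subAdj_of_le hUm hU1.1 (Ne.symm hne1) hUT hU1T hTd⟩

lemma gset_cs_fst {n k : ℕ} {p : Submodule K V × Submodule K V} :
    p ∈ GSet K V n k ↔ finrank K p.1 = k ∧ p.2 ∈ CSet' p.1 (n - k) := by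
  constructor
  · rintro ⟨h1, h2, h3, h4⟩
    exact ⟨h1, h2, h3, h4⟩
  · rintro ⟨h1, h2, h3, h4⟩
    exact ⟨h1, h2, h3, h4⟩

lemma gset_cs_snd {n k : ℕ} {p : Submodule K V × Submodule K V} :
    p ∈ GSet K V n k ↔ finrank K p.2 = n - k ∧ p.1 ∈ CSet' p.2 k := by
  constructor
  · rintro ⟨h1, h2, h3, h4⟩
    exact ⟨h2, h1, by rwa [inf_comm], by rwa [sup_comm]⟩
  · rintro ⟨h1, h2, h3, h4⟩
    exact ⟨h2, h1, by rwa [inf_comm], by rwa [sup_comm]⟩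

lemma maxTopFst {n k : ℕ} (hV : finrank K V = n) (hk1 : 1 < k) (hk2 : k < n - 1)
    {S T : Submodule K V} (hS : finrank K S = k) (hT : finrank K T = n - k + 1)
    (hST : S ⊔ T = ⊤) :
    IsMaxASubset K V n k {p ∈ GSet K V n k | p.1 = S ∧ p.2 ≤ T} := by
  have hkn : k + 2 ≤ n := by omega
  have hsum : finrank K S + (n - k) = finrank K V := by rw [hS, hV]; omega
  have hTd : finrank K T = (n - k) + 1 := by omega
  have hmem : ∀ U ∈ CSet' S (n - k), U ≤ T → (S, U) ∈ GSet K V n k ∧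
      ((S, U) : Submodule K V × Submodule K V) ∈
        {p ∈ GSet K V n k | p.1 = S ∧ p.2 ≤ T} := by
    intro U hU hUT
    have hG : (S, U) ∈ GSet K V n k := gset_cs_fst.2 ⟨hS, hU⟩
    exact ⟨hG, Set.mem_sep hG ⟨rfl, hUT⟩⟩
  constructor
  · constructor
    · exact fun p hp => hp.1
    · rintro p ⟨hpG, hp1, hp2⟩ q ⟨hqG, hq1, hq2⟩ hne
      have hsne : p.2 ≠ q.2 := by
        intro he
        exact hne (Prod.ext (hp1.trans hq1.symm) he)
      left
      refine ⟨hp1.trans hq1.symm, ?_⟩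
      exact subAdj_of_le (gset_cs_fst.1 hpG).2.1 (gset_cs_fst.1 hqG).2.1 hsne hp2 hq2 hTd
  · rintro ⟨Y, ⟨hYG, hYadj⟩, hXY⟩
    obtain ⟨q, hqY, hqX⟩ := Set.exists_of_ssubset hXY
    have hXsubY := hXY.1
    obtain ⟨U1, U2, hU1, hU1T, hU2, hU2T, h12⟩ := topTwo hsum hTd hST (by omega)
    obtain ⟨h1G, h1X⟩ := hmem U1 hU1 hU1T
    obtain ⟨h2G, h2X⟩ := hmem U2 hU2 hU2T
    -- q has first coordinate S
    have hq1 : q.1 = S := by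
      have hne1 : q ≠ (S, U1) := fun he => hqX (he ▸ h1X)
      have hne2 : q ≠ (S, U2) := fun he => hqX (he ▸ h2X)
      rcases hYadj q hqY _ (hXsubY h1X) hne1 with ⟨he, -⟩ | ⟨-, he⟩
      · exact he
      · rcases hYadj q hqY _ (hXsubY h2X) hne2 with ⟨he2, -⟩ | ⟨-, he2⟩
        · exact he2
        · exact absurd (he.symm.trans he2) h12
    have hqG := hYG hqY
    have hqCS : q.2 ∈ CSet' S (n - k) := hq1 ▸ (gset_cs_fst.1 hqG).2
    have hadjall : ∀ U ∈ CSet' S (n - k), U ≤ T → U ≠ q.2 → SubAdj K V q.2 U := by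
      intro U hU hUT hne
      obtain ⟨hUG, hUX⟩ := hmem U hU hUT
      have hqne : q ≠ (S, U) := fun he => hne (congrArg Prod.snd he).symm
      rcases hYadj q hqY _ (hXsubY hUX) hqne with ⟨-, ha⟩ | ⟨-, he⟩
      · exact ha
      · exact absurd he.symm hne
    have hq2T : q.2 ≤ T := topSat hsum hTd hST (by omega) hqCS hadjall
    exact hqX (Set.mem_sep hqG ⟨hq1, hq2T⟩)

lemma maxStarFst {n k : ℕ} (hV : finrank K V = n) (hk1 : 1 < k) (hk2 : k < n - 1)
    {S T : Submodule K V} (hS : finrank K S = k) (hT : finrank K T = n - k - 1)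
    (hST : S ⊓ T = ⊥) :
    IsMaxASubset K V n k {p ∈ GSet K V n k | p.1 = S ∧ T ≤ p.2} := by
  have hkn : k + 2 ≤ n := by omega
  have hsum : finrank K S + (n - k) = finrank K V := by rw [hS, hV]; omega
  have hTd : finrank K T + 1 = n - k := by omega
  have hmem : ∀ U ∈ CSet' S (n - k), T ≤ U → (S, U) ∈ GSet K V n k ∧
      ((S, U) : Submodule K V × Submodule K V) ∈
        {p ∈ GSet K V n k | p.1 = S ∧ T ≤ p.2} := by
    intro U hU hUT
    have hG : (S, U) ∈ GSet K V n k := gset_cs_fst.2 ⟨hS, hU⟩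
    exact ⟨hG, Set.mem_sep hG ⟨rfl, hUT⟩⟩
  constructor
  · constructor
    · exact fun p hp => hp.1
    · rintro p ⟨hpG, hp1, hp2⟩ q ⟨hqG, hq1, hq2⟩ hne
      have hsne : p.2 ≠ q.2 := by
        intro he
        exact hne (Prod.ext (hp1.trans hq1.symm) he)
      left
      refine ⟨hp1.trans hq1.symm, ?_⟩
      exact subAdj_of_ge (gset_cs_fst.1 hpG).2.1 (gset_cs_fst.1 hqG).2.1 hsne hp2 hq2 hTd
  · rintro ⟨Y, ⟨hYG, hYadj⟩, hXY⟩
    obtain ⟨q, hqY, hqX⟩ := Set.exists_of_ssubset hXY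
    have hXsubY := hXY.1
    obtain ⟨U1, U2, hU1, hU1T, hU2, hU2T, h12⟩ := starTwo hsum hTd hST (by omega) (by omega)
    obtain ⟨h1G, h1X⟩ := hmem U1 hU1 hU1T
    obtain ⟨h2G, h2X⟩ := hmem U2 hU2 hU2T
    have hq1 : q.1 = S := by
      have hne1 : q ≠ (S, U1) := fun he => hqX (he ▸ h1X)
      have hne2 : q ≠ (S, U2) := fun he => hqX (he ▸ h2X)
      rcases hYadj q hqY _ (hXsubY h1X) hne1 with ⟨he, -⟩ | ⟨-, he⟩
      · exact he
      · rcases hYadj q hqY _ (hXsubY h2X) hne2 with ⟨he2, -⟩ | ⟨-, he2⟩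
        · exact he2
        · exact absurd (he.symm.trans he2) h12
    have hqG := hYG hqY
    have hqCS : q.2 ∈ CSet' S (n - k) := hq1 ▸ (gset_cs_fst.1 hqG).2
    have hadjall : ∀ U ∈ CSet' S (n - k), T ≤ U → U ≠ q.2 → SubAdj K V q.2 U := by
      intro U hU hUT hne
      obtain ⟨hUG, hUX⟩ := hmem U hU hUT
      have hqne : q ≠ (S, U) := fun he => hne (congrArg Prod.snd he).symm
      rcases hYadj q hqY _ (hXsubY hUX) hqne with ⟨-, ha⟩ | ⟨-, he⟩
      · exact ha
      · exact absurd he.symm hne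
    have hq2T : T ≤ q.2 := starSat hsum hTd hST (by omega) (by omega) hqCS hadjall
    exact hqX (Set.mem_sep hqG ⟨hq1, hq2T⟩)

lemma maxTopSnd {n k : ℕ} (hV : finrank K V = n) (hk1 : 1 < k) (hk2 : k < n - 1)
    {T U : Submodule K V} (hT : finrank K T = k + 1) (hU : finrank K U = n - k)
    (hTU : T ⊔ U = ⊤) :
    IsMaxASubset K V n k {p ∈ GSet K V n k | p.1 ≤ T ∧ p.2 = U} := by
  have hkn : k + 2 ≤ n := by omega
  have hsum : finrank K U + k = finrank K V := by rw [hU, hV]; omega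
  have hUT : U ⊔ T = ⊤ := by rwa [sup_comm]
  have hmem : ∀ S ∈ CSet' U k, S ≤ T → (S, U) ∈ GSet K V n k ∧
      ((S, U) : Submodule K V × Submodule K V) ∈
        {p ∈ GSet K V n k | p.1 ≤ T ∧ p.2 = U} := by
    intro S hS hST
    have hG : (S, U) ∈ GSet K V n k := gset_cs_snd.2 ⟨hU, hS⟩
    exact ⟨hG, Set.mem_sep hG ⟨hST, rfl⟩⟩
  constructor
  · constructor
    · exact fun p hp => hp.1
    · rintro p ⟨hpG, hp1, hp2⟩ q ⟨hqG, hq1, hq2⟩ hne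
      have hsne : p.1 ≠ q.1 := by
        intro he
        exact hne (Prod.ext he (hp2.trans hq2.symm))
      right
      refine ⟨?_, hp2.trans hq2.symm⟩
      exact subAdj_of_le (gset_cs_snd.1 hpG).2.1 (gset_cs_snd.1 hqG).2.1 hsne hp1 hq1 hT
  · rintro ⟨Y, ⟨hYG, hYadj⟩, hXY⟩
    obtain ⟨q, hqY, hqX⟩ := Set.exists_of_ssubset hXY
    have hXsubY := hXY.1
    obtain ⟨S1, S2, hS1, hS1T, hS2, hS2T, h12⟩ := topTwo hsum hT hUT (by omega)
    obtain ⟨h1G, h1X⟩ := hmem S1 hS1 hS1T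
    obtain ⟨h2G, h2X⟩ := hmem S2 hS2 hS2T
    have hq2 : q.2 = U := by
      have hne1 : q ≠ (S1, U) := fun he => hqX (he ▸ h1X)
      have hne2 : q ≠ (S2, U) := fun he => hqX (he ▸ h2X)
      rcases hYadj q hqY _ (hXsubY h1X) hne1 with ⟨he, -⟩ | ⟨-, he⟩
      · rcases hYadj q hqY _ (hXsubY h2X) hne2 with ⟨he2, -⟩ | ⟨-, he2⟩
        · exact absurd (he.symm.trans he2) h12
        · exact he2
      · exact he
    have hqG := hYG hqY
    have hqCS : q.1 ∈ CSet' U k := hq2 ▸ (gset_cs_snd.1 hqG).2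
    have hadjall : ∀ S ∈ CSet' U k, S ≤ T → S ≠ q.1 → SubAdj K V q.1 S := by
      intro S hS hST hne
      obtain ⟨hSG, hSX⟩ := hmem S hS hST
      have hqne : q ≠ (S, U) := fun he => hne (congrArg Prod.fst he).symm
      rcases hYadj q hqY _ (hXsubY hSX) hqne with ⟨he, -⟩ | ⟨ha, -⟩
      · exact absurd he.symm hne
      · exact ha
    have hq1T : q.1 ≤ T := topSat hsum hT hUT (by omega) hqCS hadjall
    exact hqX (Set.mem_sep hqG ⟨hq1T, hq2⟩)

lemma maxStarSnd {n k : ℕ} (hV : finrank K V = n) (hk1 : 1 < k) (hk2 : k < n - 1)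
    {T U : Submodule K V} (hT : finrank K T = k - 1) (hU : finrank K U = n - k)
    (hTU : T ⊓ U = ⊥) :
    IsMaxASubset K V n k {p ∈ GSet K V n k | T ≤ p.1 ∧ p.2 = U} := by
  have hkn : k + 2 ≤ n := by omega
  have hsum : finrank K U + k = finrank K V := by rw [hU, hV]; omega
  have hUT : U ⊓ T = ⊥ := by rwa [inf_comm]
  have hTd : finrank K T + 1 = k := by omega
  have hmem : ∀ S ∈ CSet' U k, T ≤ S → (S, U) ∈ GSet K V n k ∧
      ((S, U) : Submodule K V × Submodule K V) ∈
        {p ∈ GSet K V n k | T ≤ p.1 ∧ p.2 = U} := by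
    intro S hS hST
    have hG : (S, U) ∈ GSet K V n k := gset_cs_snd.2 ⟨hU, hS⟩
    exact ⟨hG, Set.mem_sep hG ⟨hST, rfl⟩⟩
  constructor
  · constructor
    · exact fun p hp => hp.1
    · rintro p ⟨hpG, hp1, hp2⟩ q ⟨hqG, hq1, hq2⟩ hne
      have hsne : p.1 ≠ q.1 := by
        intro he
        exact hne (Prod.ext he (hp2.trans hq2.symm))
      right
      refine ⟨?_, hp2.trans hq2.symm⟩
      exact subAdj_of_ge (gset_cs_snd.1 hpG).2.1 (gset_cs_snd.1 hqG).2.1 hsne hp1 hq1 hTd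
  · rintro ⟨Y, ⟨hYG, hYadj⟩, hXY⟩
    obtain ⟨q, hqY, hqX⟩ := Set.exists_of_ssubset hXY
    have hXsubY := hXY.1
    obtain ⟨S1, S2, hS1, hS1T, hS2, hS2T, h12⟩ := starTwo hsum hTd hUT (by omega) (by omega)
    obtain ⟨h1G, h1X⟩ := hmem S1 hS1 hS1T
    obtain ⟨h2G, h2X⟩ := hmem S2 hS2 hS2T
    have hq2 : q.2 = U := by
      have hne1 : q ≠ (S1, U) := fun he => hqX (he ▸ h1X)
      have hne2 : q ≠ (S2, U) := fun he => hqX (he ▸ h2X)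
      rcases hYadj q hqY _ (hXsubY h1X) hne1 with ⟨he, -⟩ | ⟨-, he⟩
      · rcases hYadj q hqY _ (hXsubY h2X) hne2 with ⟨he2, -⟩ | ⟨-, he2⟩
        · exact absurd (he.symm.trans he2) h12
        · exact he2
      · exact he
    have hqG := hYG hqY
    have hqCS : q.1 ∈ CSet' U k := hq2 ▸ (gset_cs_snd.1 hqG).2
    have hadjall : ∀ S ∈ CSet' U k, T ≤ S → S ≠ q.1 → SubAdj K V q.1 S := by
      intro S hS hST hne
      obtain ⟨hSG, hSX⟩ := hmem S hS hST
      have hqne : q ≠ (S, U) := fun he => hne (congrArg Prod.fst he).symm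
      rcases hYadj q hqY _ (hXsubY hSX) hqne with ⟨he, -⟩ | ⟨ha, -⟩
      · exact absurd he.symm hne
      · exact ha
    have hq1T : T ≤ q.1 := starSat hsum hTd hUT (by omega) (by omega) hqCS hadjall
    exact hqX (Set.mem_sep hqG ⟨hq1T, hq2⟩)

end Core
end Aux

/-- For `1 < k < n - 1`, the maximal A-subsets of 𝒢 are exactly the four kinds of
sets 𝒢(S,T) and 𝒢(T,U) described in the paper. -/
theorem maximal_A_subsets
    {K V : Type*} [DivisionRing K] [AddCommGroup V] [Module K V]
    [FiniteDimensional K V] {n k : ℕ} (hV : finrank K V = n)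
    (hk1 : 1 < k) (hk2 : k < n - 1)
    (X : Set (Submodule K V × Submodule K V)) :
    IsMaxASubset K V n k X ↔
      ((∃ S T : Submodule K V, finrank K S = k ∧ finrank K T = n - k + 1 ∧
          S ⊔ T = ⊤ ∧ X = {p ∈ GSet K V n k | p.1 = S ∧ p.2 ≤ T}) ∨
       (∃ S T : Submodule K V, finrank K S = k ∧ finrank K T = n - k - 1 ∧
          S ⊓ T = ⊥ ∧ X = {p ∈ GSet K V n k | p.1 = S ∧ T ≤ p.2}) ∨
       (∃ T U : Submodule K V, finrank K T = k + 1 ∧ finrank K U = n - k ∧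
          T ⊔ U = ⊤ ∧ X = {p ∈ GSet K V n k | p.1 ≤ T ∧ p.2 = U}) ∨
       (∃ T U : Submodule K V, finrank K T = k - 1 ∧ finrank K U = n - k ∧
          T ⊓ U = ⊥ ∧ X = {p ∈ GSet K V n k | T ≤ p.1 ∧ p.2 = U})) := by
  have hkn : k + 2 ≤ n := by omega
  constructor
  · rintro ⟨⟨hXG, hXadj⟩, hmax⟩
    -- X has two distinct elements
    have hex2 : ∃ p ∈ X, ∃ q ∈ X, p ≠ q := by
      by_contra hc
      push_neg at hc
      rcases Set.eq_empty_or_nonempty X with he | ⟨p, hpX⟩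
      · obtain ⟨S0, hS0⟩ := exists_finrank_eq' (K := K) (V := V) k (by omega)
        obtain ⟨U0, hU0⟩ := Submodule.exists_isCompl S0
        have hd : finrank K S0 + finrank K U0 = finrank K V :=
          Submodule.finrank_add_eq_of_isCompl hU0
        have hp0 : (S0, U0) ∈ GSet K V n k :=
          ⟨hS0, (by omega : finrank K ↥U0 = n - k), hU0.inf_eq_bot, hU0.sup_eq_top⟩
        apply hmax
        refine ⟨{(S0, U0)}, ⟨Set.singleton_subset_iff.2 hp0, ?_⟩, ?_⟩
        · rintro a ha b hb hab
          rw [Set.mem_singleton_iff] at ha hb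
          exact absurd (ha.trans hb.symm) hab
        · rw [he]
          exact Set.empty_ssubset.2 ⟨_, rfl⟩
      · have hpG := hXG hpX
        obtain ⟨hpk, hpCS⟩ := gset_cs_fst.1 hpG
        have hsum : finrank K p.1 + (n - k) = finrank K V := by rw [hpk, hV]; omega
        obtain ⟨U', hU', hU'ne, hadj⟩ := adjPartner (by omega) (by omega) hsum hpCS
        have hqG : (p.1, U') ∈ GSet K V n k := gset_cs_fst.2 ⟨hpk, hU'⟩
        have hqne : (p.1, U') ≠ p := fun he => hU'ne (congrArg Prod.snd he)
        apply hmax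
        refine ⟨insert (p.1, U') X, ⟨?_, ?_⟩, Set.ssubset_insert ?_⟩
        · rintro a (rfl | haX)
          · exact hqG
          · exact hXG haX
        · rintro a ha b hb hab
          rcases ha with rfl | haX <;> rcases hb with rfl | hbX
          · exact absurd rfl hab
          · have hbp : b = p := hc b hbX p hpX
            rw [hbp]
            left
            exact ⟨rfl, hadj.symm'⟩
          · have hap : a = p := hc a haX p hpX
            rw [hap]
            left
            exact ⟨rfl, hadj⟩
          · rw [hc a haX p hpX, hc b hbX p hpX] at hab
            exact absurd rfl hab
        · intro hmem
          exact hqne (hc _ hmem p hpX)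
    obtain ⟨p, hpX, q, hqX, hpqne⟩ := hex2
    rcases hXadj p hpX q hqX hpqne with ⟨hfst, -⟩ | ⟨-, hsnd⟩
    · -- all first coordinates are equal
      have hall : ∀ r ∈ X, r.1 = p.1 := by
        intro r hr
        by_contra hrne
        have hrp : r ≠ p := fun he => hrne (congrArg Prod.fst he)
        have h1 : r.2 = p.2 := by
          rcases hXadj r hr p hpX hrp with ⟨he, -⟩ | ⟨-, h⟩
          · exact absurd he hrne
          · exact h
        have hrq : r ≠ q := by
          intro he
          rw [he] at hrne
          exact hrne hfst.symm
        have h2 : r.2 = q.2 := by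
          rcases hXadj r hr q hqX hrq with ⟨he, -⟩ | ⟨-, h⟩
          · exact absurd (he.trans hfst.symm) hrne
          · exact h
        exact hpqne (Prod.ext hfst (h1.symm.trans h2))
      have hpG := hXG hpX
      obtain ⟨hSk, hpCS⟩ := gset_cs_fst.1 hpG
      have hsubY : Prod.snd '' X ⊆ CSet' p.1 (n - k) := by
        rintro _ ⟨r, hrX, rfl⟩
        have := (gset_cs_fst.1 (hXG hrX)).2
        rwa [hall r hrX] at this
      have hadjY : ∀ U ∈ Prod.snd '' X, ∀ U' ∈ Prod.snd '' X, U ≠ U' → SubAdj K V U U' := by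
        rintro _ ⟨r, hrX, rfl⟩ _ ⟨r', hr'X, rfl⟩ hne
        have hrr' : r ≠ r' := fun he => hne (congrArg Prod.snd he)
        rcases hXadj r hrX r' hr'X hrr' with ⟨-, h⟩ | ⟨-, h⟩
        · exact h
        · exact absurd h hne
      have hp2m : p.2 ∈ Prod.snd '' X := ⟨p, hpX, rfl⟩
      have hq2m : q.2 ∈ Prod.snd '' X := ⟨q, hqX, rfl⟩
      have hpq2 : p.2 ≠ q.2 := fun he => hpqne (Prod.ext hfst he)
      rcases cliqueClass hsubY hadjY hp2m hq2m hpq2 with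
        ⟨T, hTd, hFT, hallT⟩ | ⟨T, hTd, hFT, hallT⟩
      · left
        refine ⟨p.1, T, hSk, by omega, hFT, ?_⟩
        have hX' := maxTopFst hV hk1 hk2 hSk (by omega) hFT
        have hsub : X ⊆ {r ∈ GSet K V n k | r.1 = p.1 ∧ r.2 ≤ T} := fun r hr =>
          Set.mem_sep (hXG hr) ⟨hall r hr, hallT _ ⟨r, hr, rfl⟩⟩
        rcases eq_or_ne X {r ∈ GSet K V n k | r.1 = p.1 ∧ r.2 ≤ T} with he | hne
        · exact he
        · exact absurd ⟨_, hX'.1, hsub.ssubset_of_ne hne⟩ hmax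
      · right; left
        refine ⟨p.1, T, hSk, by omega, hFT, ?_⟩
        have hX' := maxStarFst hV hk1 hk2 hSk (by omega) hFT
        have hsub : X ⊆ {r ∈ GSet K V n k | r.1 = p.1 ∧ T ≤ r.2} := fun r hr =>
          Set.mem_sep (hXG hr) ⟨hall r hr, hallT _ ⟨r, hr, rfl⟩⟩
        rcases eq_or_ne X {r ∈ GSet K V n k | r.1 = p.1 ∧ T ≤ r.2} with he | hne
        · exact he
        · exact absurd ⟨_, hX'.1, hsub.ssubset_of_ne hne⟩ hmax
    · -- all second coordinates are equal
      have hall : ∀ r ∈ X, r.2 = p.2 := by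
        intro r hr
        by_contra hrne
        have hrp : r ≠ p := fun he => hrne (congrArg Prod.snd he)
        have h1 : r.1 = p.1 := by
          rcases hXadj r hr p hpX hrp with ⟨h, -⟩ | ⟨-, he⟩
          · exact h
          · exact absurd he hrne
        have hrq : r ≠ q := by
          intro he
          rw [he] at hrne
          exact hrne hsnd.symm
        have h2 : r.1 = q.1 := by
          rcases hXadj r hr q hqX hrq with ⟨h, -⟩ | ⟨-, he⟩
          · exact h
          · exact absurd (he.trans hsnd.symm) hrne
        exact hpqne (Prod.ext (h1.symm.trans h2) hsnd)
      have hpG := hXG hpX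
      obtain ⟨hUd, hpCS⟩ := gset_cs_snd.1 hpG
      have hsubY : Prod.fst '' X ⊆ CSet' p.2 k := by
        rintro _ ⟨r, hrX, rfl⟩
        have := (gset_cs_snd.1 (hXG hrX)).2
        rwa [hall r hrX] at this
      have hadjY : ∀ S ∈ Prod.fst '' X, ∀ S' ∈ Prod.fst '' X, S ≠ S' → SubAdj K V S S' := by
        rintro _ ⟨r, hrX, rfl⟩ _ ⟨r', hr'X, rfl⟩ hne
        have hrr' : r ≠ r' := fun he => hne (congrArg Prod.fst he)
        rcases hXadj r hrX r' hr'X hrr' with ⟨h, -⟩ | ⟨h, -⟩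
        · exact absurd h hne
        · exact h
      have hp1m : p.1 ∈ Prod.fst '' X := ⟨p, hpX, rfl⟩
      have hq1m : q.1 ∈ Prod.fst '' X := ⟨q, hqX, rfl⟩
      have hpq1 : p.1 ≠ q.1 := fun he => hpqne (Prod.ext he hsnd)
      rcases cliqueClass hsubY hadjY hp1m hq1m hpq1 with
        ⟨T, hTd, hFT, hallT⟩ | ⟨T, hTd, hFT, hallT⟩
      · right; right; left
        refine ⟨T, p.2, hTd, hUd, by rwa [sup_comm] at hFT, ?_⟩
        have hX' := maxTopSnd hV hk1 hk2 hTd hUd (by rwa [sup_comm] at hFT)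
        have hsub : X ⊆ {r ∈ GSet K V n k | r.1 ≤ T ∧ r.2 = p.2} := fun r hr =>
          Set.mem_sep (hXG hr) ⟨hallT _ ⟨r, hr, rfl⟩, hall r hr⟩
        rcases eq_or_ne X {r ∈ GSet K V n k | r.1 ≤ T ∧ r.2 = p.2} with he | hne
        · exact he
        · exact absurd ⟨_, hX'.1, hsub.ssubset_of_ne hne⟩ hmax
      · right; right; right
        have hTd' : finrank K ↥T = k - 1 := by omega
        refine ⟨T, p.2, hTd', hUd, by rwa [inf_comm] at hFT, ?_⟩
        have hX' := maxStarSnd hV hk1 hk2 hTd' hUd (by rwa [inf_comm] at hFT)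
        have hsub : X ⊆ {r ∈ GSet K V n k | T ≤ r.1 ∧ r.2 = p.2} := fun r hr =>
          Set.mem_sep (hXG hr) ⟨hallT _ ⟨r, hr, rfl⟩, hall r hr⟩
        rcases eq_or_ne X {r ∈ GSet K V n k | T ≤ r.1 ∧ r.2 = p.2} with he | hne
        · exact he
        · exact absurd ⟨_, hX'.1, hsub.ssubset_of_ne hne⟩ hmax
  · rintro (⟨S, T, hS, hT, hST, rfl⟩ | ⟨S, T, hS, hT, hST, rfl⟩ |
      ⟨T, U, hT, hU, hTU, rfl⟩ | ⟨T, U, hT, hU, hTU, rfl⟩)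
    · exact maxTopFst hV hk1 hk2 hS hT hST
    · exact maxStarFst hV hk1 hk2 hS hT hST
    · exact maxTopSnd hV hk1 hk2 hT hU hTU
    · exact maxStarSnd hV hk1 hk2 hT hU hTU
end

section
/- Any two elements (S,U) and (S',U') of G can be connected by a finite sequence (S,U) = (S₀,U₀), (S₁,U₁), …, (S_i,U_i) = (S',U') of elements of G in which consecutive terms are adjacent. -/
open Module

variable (K V : Type*) [DivisionRing K] [AddCommGroup V] [Module K V]

section Aux

open Relation

variable {K V : Type*} [DivisionRing K] [AddCommGroup V] [Module K V]

/-- Extend a subspace `A` disjoint from `B`, both inside `C`, to a complement of `B` in `C`. -/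
lemma aux_exists_compl_between {A B C : Submodule K V} (hAC : A ≤ C) (hBC : B ≤ C)
    (hAB : Disjoint A B) :
    ∃ W : Submodule K V, A ≤ W ∧ W ≤ C ∧ Disjoint W B ∧ W ⊔ B = C := by
  set A' : Submodule K ↥C := A.comap C.subtype with hA'
  set B' : Submodule K ↥C := B.comap C.subtype with hB'
  obtain ⟨D, hD⟩ := Submodule.exists_isCompl (A' ⊔ B')
  refine ⟨(A' ⊔ D).map C.subtype, ?_, ?_, ?_, ?_⟩
  · intro a ha
    exact ⟨⟨a, hAC ha⟩, Submodule.mem_sup_left (by simpa [hA'] using ha), rfl⟩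
  · rintro x ⟨y, -, rfl⟩; exact y.2
  · rw [Submodule.disjoint_def]
    rintro x ⟨y, hy, rfl⟩ hxB
    obtain ⟨a, haA, d, hdD, hadd⟩ := Submodule.mem_sup.mp hy
    have hyB' : y ∈ B' := by simpa [hB'] using hxB
    have hd' : d ∈ A' ⊔ B' := by
      have hdy : d = y - a := by rw [← hadd]; abel
      rw [hdy]
      exact Submodule.sub_mem _ (Submodule.mem_sup_right hyB') (Submodule.mem_sup_left haA)
    have hd0 : d = 0 := by
      have := hD.disjoint.le_bot (Submodule.mem_inf.mpr ⟨hd', hdD⟩)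
      simpa using this
    have hyA : y = a := by rw [← hadd, hd0, add_zero]
    have hmem : (y : V) ∈ A ⊓ B := ⟨by rw [hyA]; exact haA, hxB⟩
    simpa using hAB.le_bot hmem
  · apply le_antisymm
    · apply sup_le _ hBC
      rintro x ⟨y, -, rfl⟩; exact y.2
    · intro c hc
      have hcc : (⟨c, hc⟩ : ↥C) ∈ (A' ⊔ B') ⊔ D := by rw [hD.codisjoint.eq_top]; trivial
      obtain ⟨ab, hab, d, hd, habd⟩ := Submodule.mem_sup.mp hcc
      obtain ⟨a, ha, b, hb, hab2⟩ := Submodule.mem_sup.mp hab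
      have hc2 : c = ((a + d : ↥C) : V) + (b : V) := by
        have h3 := congrArg (Subtype.val) habd
        rw [← hab2] at h3
        simp only [Submodule.coe_add] at h3 ⊢
        rw [← h3]; abel
      rw [hc2]
      exact Submodule.add_mem _
        (Submodule.mem_sup_left ⟨a + d, Submodule.add_mem _ (Submodule.mem_sup_left ha) (Submodule.mem_sup_right hd), rfl⟩)
        (Submodule.mem_sup_right hb)

variable [FiniteDimensional K V]

/-- One adjacency step from a complement `U` of `S` towards another complement `U'`. -/
lemma aux_step {S U U' : Submodule K V} (hU : IsCompl S U) (hU' : IsCompl S U')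
    (hne : U ≠ U') :
    ∃ U'' : Submodule K V, IsCompl S U'' ∧ SubAdj K V U U'' ∧
      finrank K ↥(U ⊓ U') < finrank K ↥(U'' ⊓ U') := by
  have hrkU := Submodule.finrank_add_eq_of_isCompl hU
  have hrkU' := Submodule.finrank_add_eq_of_isCompl hU'
  have hrk : finrank K U = finrank K U' := by omega
  obtain ⟨u', hu'U', hu'U⟩ : ∃ u', u' ∈ U' ∧ u' ∉ U := by
    by_contra h
    push_neg at h
    exact hne (Submodule.eq_of_le_of_finrank_le h hrk.le).symm
  have hu'top : u' ∈ S ⊔ U := by rw [hU.codisjoint.eq_top]; trivial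
  obtain ⟨s, hs, u, hu, hsu⟩ := Submodule.mem_sup.mp hu'top
  have hu'0 : u' ≠ 0 := fun h => hu'U (h ▸ Submodule.zero_mem U)
  have hu0 : u ≠ 0 := by
    rintro rfl
    rw [add_zero] at hsu
    have hmem : u' ∈ S ⊓ U' := ⟨hsu ▸ hs, hu'U'⟩
    rw [hU'.disjoint.eq_bot] at hmem
    exact hu'0 (by simpa using hmem)
  have huU' : u ∉ U' := by
    intro h
    have hsU' : s ∈ U' := by
      have hse : s = u' - u := by rw [← hsu]; abel
      rw [hse]; exact Submodule.sub_mem _ hu'U' h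
    have hmem : s ∈ S ⊓ U' := ⟨hs, hsU'⟩
    rw [hU'.disjoint.eq_bot] at hmem
    have hs0 : s = 0 := by simpa using hmem
    rw [hs0, zero_add] at hsu
    exact hu'U (hsu ▸ hu)
  have hudisj : Disjoint (U ⊓ U') (K ∙ u) :=
    (Submodule.disjoint_span_singleton' hu0).mpr (fun h => huU' h.2)
  obtain ⟨W, hAW, hWU, hWdisj, hWsup⟩ :=
    aux_exists_compl_between (A := U ⊓ U') (B := K ∙ u) (C := U)
      inf_le_left (by rwa [Submodule.span_singleton_le_iff_mem]) hudisj
  have hu'W : u' ∉ W := fun h => hu'U (hWU h)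
  set U'' := W ⊔ (K ∙ u') with hU''def
  have hWu' : Disjoint W (K ∙ u') := (Submodule.disjoint_span_singleton' hu'0).mpr hu'W
  have h1 : finrank K U = finrank K W + 1 := by
    have h := Submodule.finrank_sup_add_finrank_inf_eq W (K ∙ u)
    rw [hWsup, hWdisj.eq_bot, finrank_bot, finrank_span_singleton hu0] at h
    omega
  have h2 : finrank K U'' = finrank K W + 1 := by
    have h := Submodule.finrank_sup_add_finrank_inf_eq W (K ∙ u')
    rw [hWu'.eq_bot, finrank_bot, finrank_span_singleton hu'0] at h
    rw [hU''def]; omega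
  have hUU'' : U ⊓ U'' = W := by
    apply le_antisymm
    · rintro x ⟨hxU, hxU''⟩
      obtain ⟨w, hw, z, hz, hwz⟩ := Submodule.mem_sup.mp hxU''
      obtain ⟨c, rfl⟩ := Submodule.mem_span_singleton.mp hz
      by_cases hc : c = 0
      · rw [hc, zero_smul, add_zero] at hwz; exact hwz ▸ hw
      · exfalso
        have hcu' : c • u' ∈ U := by
          have he : c • u' = x - w := by rw [← hwz]; abel
          rw [he]; exact Submodule.sub_mem _ hxU (hWU hw)
        exact hu'U ((Submodule.smul_mem_iff _ hc).mp hcu')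
    · exact le_inf hWU le_sup_left
  have hcompl : IsCompl S U'' := by
    constructor
    · rw [Submodule.disjoint_def]
      intro x hxS hxU''
      obtain ⟨w, hw, z, hz, hwz⟩ := Submodule.mem_sup.mp hxU''
      obtain ⟨c, rfl⟩ := Submodule.mem_span_singleton.mp hz
      have hx2 : x - c • s = w + c • u := by
        rw [← hwz, ← hsu, smul_add]; abel
      have hmem : x - c • s ∈ S ⊓ U := by
        constructor
        · exact Submodule.sub_mem _ hxS (Submodule.smul_mem _ _ hs)
        · rw [hx2]; exact Submodule.add_mem _ (hWU hw) (Submodule.smul_mem _ _ hu)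
      rw [hU.disjoint.eq_bot] at hmem
      have h0 : x - c • s = 0 := by simpa using hmem
      have hwcu : w + c • u = 0 := by rw [← hx2, h0]
      have hcuW : c • u = -w := eq_neg_of_add_eq_zero_right hwcu
      have hcumem : c • u ∈ W ⊓ (K ∙ u) :=
        ⟨hcuW ▸ Submodule.neg_mem _ hw,
          Submodule.smul_mem _ _ (Submodule.mem_span_singleton_self u)⟩
      rw [hWdisj.eq_bot] at hcumem
      have hcu0 : c • u = 0 := by simpa using hcumem
      have hc0 : c = 0 := by
        rcases smul_eq_zero.mp hcu0 with h | h
        · exact h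
        · exact absurd h hu0
      have hxw : x = w := by rw [← hwz, hc0, zero_smul, add_zero]
      have hxm : x ∈ S ⊓ U := ⟨hxS, hxw ▸ hWU hw⟩
      rw [hU.disjoint.eq_bot] at hxm
      simpa using hxm
    · rw [codisjoint_iff]
      apply le_antisymm le_top
      have hUle : U ≤ S ⊔ U'' := by
        rw [← hWsup]
        apply sup_le
        · exact le_trans le_sup_left le_sup_right
        · rw [Submodule.span_singleton_le_iff_mem]
          have hue : u = u' - s := by rw [← hsu]; abel
          rw [hue]
          exact Submodule.sub_mem _
            (Submodule.mem_sup_right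
              (Submodule.mem_sup_right (Submodule.mem_span_singleton_self u')))
            (Submodule.mem_sup_left hs)
      rw [← hU.codisjoint.eq_top]
      exact sup_le le_sup_left hUle
  refine ⟨U'', hcompl, ⟨by omega, by rw [hUU'']; omega⟩, ?_⟩
  have hdisj2 : Disjoint (U ⊓ U') (K ∙ u') :=
    (Submodule.disjoint_span_singleton' hu'0).mpr (fun h => hu'U h.1)
  have hle : (U ⊓ U') ⊔ (K ∙ u') ≤ U'' ⊓ U' :=
    sup_le (le_inf (le_trans hAW le_sup_left) inf_le_right)
      (le_inf le_sup_right ((Submodule.span_singleton_le_iff_mem _ _).mpr hu'U'))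
  have h3 := Submodule.finrank_sup_add_finrank_inf_eq (U ⊓ U') (K ∙ u')
  rw [hdisj2.eq_bot, finrank_bot, finrank_span_singleton hu'0] at h3
  have h4 := Submodule.finrank_mono hle
  omega

/-- Complements of a fixed subspace are connected by adjacency steps. -/
lemma aux_chain {S U' : Submodule K V} (hU' : IsCompl S U') :
    ∀ (m : ℕ) (U : Submodule K V), IsCompl S U →
      finrank K ↥U' - finrank K ↥(U ⊓ U') ≤ m →
      ReflTransGen (fun A B : Submodule K V =>
        IsCompl S A ∧ IsCompl S B ∧ SubAdj K V A B) U U' := by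
  intro m
  induction m with
  | zero =>
    intro U hU hm
    have hrkU := Submodule.finrank_add_eq_of_isCompl hU
    have hrkU' := Submodule.finrank_add_eq_of_isCompl hU'
    have hinf : finrank K ↥(U ⊓ U') ≤ finrank K ↥U' := Submodule.finrank_mono inf_le_right
    have heq : U ⊓ U' = U' := Submodule.eq_of_le_of_finrank_le inf_le_right (by omega)
    have hle : U' ≤ U := heq ▸ inf_le_left
    have : U' = U := Submodule.eq_of_le_of_finrank_le hle (by omega)
    rw [this]
  | succ m ih =>
    intro U hU hm
    by_cases hne : U = U'
    · rw [hne]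
    · obtain ⟨U'', hc'', hadj, hlt⟩ := aux_step hU hU' hne
      have hrk : finrank K U = finrank K U'' := hadj.1
      have hb : finrank K ↥(U'' ⊓ U') ≤ finrank K ↥U' := Submodule.finrank_mono inf_le_right
      exact ReflTransGen.head ⟨hU, hc'', hadj⟩ (ih U'' hc'' (by omega))

/-- A nonzero vector outside two proper subspaces. -/
lemma aux_exists_not_mem {S T : Submodule K V} (hS : S ≠ ⊤) (hT : T ≠ ⊤) :
    ∃ v : V, v ∉ S ∧ v ∉ T := by
  have hs : ∃ a : V, a ∉ S := by
    by_contra h; push_neg at h; exact hS (Submodule.eq_top_iff'.mpr h)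
  have ht : ∃ b : V, b ∉ T := by
    by_contra h; push_neg at h; exact hT (Submodule.eq_top_iff'.mpr h)
  obtain ⟨a, ha⟩ := hs
  obtain ⟨b, hb⟩ := ht
  by_cases haT : a ∉ T
  · exact ⟨a, ha, haT⟩
  by_cases hbS : b ∉ S
  · exact ⟨b, hbS, hb⟩
  push_neg at haT hbS
  refine ⟨a + b, fun h => ha ?_, fun h => hb ?_⟩
  · have := Submodule.sub_mem _ h hbS; simpa using this
  · have := Submodule.sub_mem _ h haT
    have h2 : a + b - a = b := by abel
    rwa [h2] at this

/-- Two subspaces of equal finrank have a common complement. -/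
lemma aux_common_compl :
    ∀ (m : ℕ) (S T : Submodule K V), finrank K S = finrank K T →
      finrank K V - finrank K S ≤ m → ∃ W : Submodule K V, IsCompl S W ∧ IsCompl T W := by
  intro m
  induction m with
  | zero =>
    intro S T hST hm
    have hS : S = ⊤ := Submodule.eq_of_le_of_finrank_le le_top
      (by rw [finrank_top]; omega)
    have hT : T = ⊤ := Submodule.eq_of_le_of_finrank_le le_top
      (by rw [finrank_top]; omega)
    exact ⟨⊥, hS ▸ isCompl_top_bot, hT ▸ isCompl_top_bot⟩
  | succ m ih =>
    intro S T hST hm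
    by_cases hStop : S = ⊤
    · have hT : T = ⊤ := Submodule.eq_of_le_of_finrank_le le_top
        (by rw [finrank_top, ← hST, hStop, finrank_top])
      exact ⟨⊥, hStop ▸ isCompl_top_bot, hT ▸ isCompl_top_bot⟩
    · have hTtop : T ≠ ⊤ := by
        intro h
        exact hStop (Submodule.eq_of_le_of_finrank_le le_top
          (by rw [finrank_top, hST, h, finrank_top]))
      obtain ⟨v, hvS, hvT⟩ := aux_exists_not_mem hStop hTtop
      have hv0 : v ≠ 0 := fun h => hvS (h ▸ Submodule.zero_mem S)
      have hdS : Disjoint S (K ∙ v) := (Submodule.disjoint_span_singleton' hv0).mpr hvS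
      have hdT : Disjoint T (K ∙ v) := (Submodule.disjoint_span_singleton' hv0).mpr hvT
      have hS1 : finrank K ↥(S ⊔ (K ∙ v)) = finrank K S + 1 := by
        have h := Submodule.finrank_sup_add_finrank_inf_eq S (K ∙ v)
        rw [hdS.eq_bot, finrank_bot, finrank_span_singleton hv0] at h
        omega
      have hT1 : finrank K ↥(T ⊔ (K ∙ v)) = finrank K T + 1 := by
        have h := Submodule.finrank_sup_add_finrank_inf_eq T (K ∙ v)
        rw [hdT.eq_bot, finrank_bot, finrank_span_singleton hv0] at h
        omega
      have hle : finrank K ↥(S ⊔ (K ∙ v)) ≤ finrank K V := Submodule.finrank_le _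
      obtain ⟨W₀, hW₀S, hW₀T⟩ := ih (S ⊔ (K ∙ v)) (T ⊔ (K ∙ v)) (by omega) (by omega)
      refine ⟨W₀ ⊔ (K ∙ v), ?_, ?_⟩
      · constructor
        · rw [Submodule.disjoint_def]
          intro x hxS hxW
          obtain ⟨w, hw, z, hz, hwz⟩ := Submodule.mem_sup.mp hxW
          obtain ⟨c, rfl⟩ := Submodule.mem_span_singleton.mp hz
          have hwm : w ∈ (S ⊔ (K ∙ v)) ⊓ W₀ := by
            refine ⟨?_, hw⟩
            have he : w = x - c • v := by rw [← hwz]; abel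
            rw [he]
            exact Submodule.sub_mem _ (Submodule.mem_sup_left hxS)
              (Submodule.mem_sup_right (Submodule.smul_mem _ _
                (Submodule.mem_span_singleton_self v)))
          rw [hW₀S.disjoint.eq_bot] at hwm
          have hw0 : w = 0 := by simpa using hwm
          have hxv : x = c • v := by rw [← hwz, hw0, zero_add]
          by_cases hc : c = 0
          · rw [hxv, hc, zero_smul]
          · exact absurd ((Submodule.smul_mem_iff _ hc).mp (hxv ▸ hxS)) hvS
        · rw [codisjoint_iff]
          apply le_antisymm le_top
          rw [← hW₀S.codisjoint.eq_top]
          apply sup_le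
          · apply sup_le le_sup_left
            exact le_trans le_sup_right le_sup_right
          · exact le_trans le_sup_left le_sup_right
      · constructor
        · rw [Submodule.disjoint_def]
          intro x hxT hxW
          obtain ⟨w, hw, z, hz, hwz⟩ := Submodule.mem_sup.mp hxW
          obtain ⟨c, rfl⟩ := Submodule.mem_span_singleton.mp hz
          have hwm : w ∈ (T ⊔ (K ∙ v)) ⊓ W₀ := by
            refine ⟨?_, hw⟩
            have he : w = x - c • v := by rw [← hwz]; abel
            rw [he]
            exact Submodule.sub_mem _ (Submodule.mem_sup_left hxT)
              (Submodule.mem_sup_right (Submodule.smul_mem _ _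
                (Submodule.mem_span_singleton_self v)))
          rw [hW₀T.disjoint.eq_bot] at hwm
          have hw0 : w = 0 := by simpa using hwm
          have hxv : x = c • v := by rw [← hwz, hw0, zero_add]
          by_cases hc : c = 0
          · rw [hxv, hc, zero_smul]
          · exact absurd ((Submodule.smul_mem_iff _ hc).mp (hxv ▸ hxT)) hvT
        · rw [codisjoint_iff]
          apply le_antisymm le_top
          rw [← hW₀T.codisjoint.eq_top]
          apply sup_le
          · apply sup_le le_sup_left
            exact le_trans le_sup_right le_sup_right
          · exact le_trans le_sup_left le_sup_right

variable {n k : ℕ}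

/-- Membership in `GSet` from complementarity. -/
lemma aux_memG (hV : finrank K V = n) (hkn : k ≤ n) {S X : Submodule K V}
    (h : IsCompl S X) (hSk : finrank K S = k) : (S, X) ∈ GSet K V n k := by
  have hadd := Submodule.finrank_add_eq_of_isCompl h
  refine ⟨hSk, ?_, disjoint_iff.mp h.disjoint, codisjoint_iff.mp h.codisjoint⟩
  show finrank K ↥X = n - k
  omega

/-- Lift a chain in the second coordinate. -/
lemma aux_liftSnd (hV : finrank K V = n) (hkn : k ≤ n) {S : Submodule K V}
    (hSk : finrank K S = k) {U U' : Submodule K V}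
    (h : ReflTransGen (fun A B : Submodule K V =>
      IsCompl S A ∧ IsCompl S B ∧ SubAdj K V A B) U U')
    (hm : (S, U) ∈ GSet K V n k) (hm' : (S, U') ∈ GSet K V n k) :
    ReflTransGen (fun a b : GSet K V n k => PairAdj K V a.val b.val)
      ⟨(S, U), hm⟩ ⟨(S, U'), hm'⟩ := by
  induction h with
  | refl => rfl
  | @tail b c hbc hstep ih =>
    have hmb : (S, b) ∈ GSet K V n k := aux_memG hV hkn hstep.1 hSk
    exact ReflTransGen.tail (ih hmb) (Or.inl ⟨rfl, hstep.2.2⟩)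

/-- Lift a chain in the first coordinate. -/
lemma aux_liftFst (hV : finrank K V = n) (hkn : k ≤ n) {W : Submodule K V}
    (hWk : finrank K W = n - k) {S S' : Submodule K V}
    (h : ReflTransGen (fun A B : Submodule K V =>
      IsCompl W A ∧ IsCompl W B ∧ SubAdj K V A B) S S')
    (hm : (S, W) ∈ GSet K V n k) (hm' : (S', W) ∈ GSet K V n k) :
    ReflTransGen (fun a b : GSet K V n k => PairAdj K V a.val b.val)
      ⟨(S, W), hm⟩ ⟨(S', W), hm'⟩ := by
  induction h with
  | refl => rfl
  | @tail b c hbc hstep ih =>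
    have hadd := Submodule.finrank_add_eq_of_isCompl hstep.1
    have hbk : finrank K ↥b = k := by
      have h5 := Submodule.finrank_le W
      omega
    have hmb : (b, W) ∈ GSet K V n k :=
      ⟨hbk, hWk, disjoint_iff.mp hstep.1.symm.disjoint,
        codisjoint_iff.mp hstep.1.symm.codisjoint⟩
    exact ReflTransGen.tail (ih hmb) (Or.inr ⟨hstep.2.2, rfl⟩)

end Aux

/-- Any two elements of 𝒢 can be connected by a finite sequence of elements of 𝒢
in which consecutive terms are adjacent. -/
theorem G_connected
    {K V : Type*} [DivisionRing K] [AddCommGroup V] [Module K V]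
    [FiniteDimensional K V] {n k : ℕ} (hn : 2 ≤ n) (hV : finrank K V = n)
    (hk1 : 1 ≤ k) (hk2 : k ≤ n - 1) (p q : GSet K V n k) :
    Relation.ReflTransGen
      (fun a b : GSet K V n k => PairAdj K V a.val b.val) p q := by
  have hkn : k ≤ n := le_trans hk2 (Nat.sub_le n 1)
  obtain ⟨⟨S, U⟩, hmp⟩ := p
  obtain ⟨⟨S', U'⟩, hmq⟩ := q
  obtain ⟨hSk0, hUk0, hcU1, hcU2⟩ := hmp
  obtain ⟨hS'k0, hU'k0, hcU'1, hcU'2⟩ := hmq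
  have hSk : finrank K S = k := hSk0
  have hUk : finrank K U = n - k := hUk0
  have hS'k : finrank K S' = k := hS'k0
  have hU'k : finrank K U' = n - k := hU'k0
  have hCU : IsCompl S U := ⟨disjoint_iff.mpr hcU1, codisjoint_iff.mpr hcU2⟩
  have hCU' : IsCompl S' U' := ⟨disjoint_iff.mpr hcU'1, codisjoint_iff.mpr hcU'2⟩
  obtain ⟨W, hWS, hWS'⟩ := aux_common_compl n S S' (by rw [hSk, hS'k]) (by omega)
  have hWnk : finrank K W = n - k := by
    have := Submodule.finrank_add_eq_of_isCompl hWS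
    omega
  have hmp : (S, U) ∈ GSet K V n k := ⟨hSk, hUk, hcU1, hcU2⟩
  have hmSW : (S, W) ∈ GSet K V n k := aux_memG hV hkn hWS hSk
  have hmS'W : (S', W) ∈ GSet K V n k := aux_memG hV hkn hWS' hS'k
  have hmq : (S', U') ∈ GSet K V n k := ⟨hS'k, hU'k, hcU'1, hcU'2⟩
  have bound1 : finrank K ↥W - finrank K ↥(U ⊓ W) ≤ n := by
    have := Submodule.finrank_le W; omega
  have bound2 : finrank K ↥S' - finrank K ↥(S ⊓ S') ≤ n := by
    have := Submodule.finrank_le S'; omega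
  have bound3 : finrank K ↥U' - finrank K ↥(W ⊓ U') ≤ n := by
    have := Submodule.finrank_le U'; omega
  have c1 := aux_liftSnd hV hkn hSk (aux_chain hWS n U hCU bound1) hmp hmSW
  have c2 := aux_liftFst hV hkn hWnk
    (aux_chain (S := W) hWS'.symm n S hWS.symm bound2) hmSW hmS'W
  have c3 := aux_liftSnd hV hkn hS'k (aux_chain hCU' n W hWS' bound3) hmS'W hmq
  exact (c1.trans c2).trans c3
end
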